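/- Let γ>0 and ν∈ℝ, and define f:ℝ→ℝ by f(h) = −|h+ν| + γ when |h+ν| ≥ 2γ and f(h) = −(h+ν)²/(4γ) when |h+ν| ≤ 2γ (equivalently, f(h) = min_{t∈[−1,1]} ((h+ν)t + γt²)). Then for h a standard normal random variable, E[f(h)] = I22(γ,ν) − I1(γ,ν) + I21(γ,ν), where I22(γ,ν) = (1/2)(ν+γ)·erfc((ν+2γ)/√2) − e^{−(ν+2γ)²/2}/√(2π), I1(γ,ν) = [ √(π/2)(ν²+1)·erf((2γ−ν)/√2) + √(π/2)(ν²+1)·erf((2γ+ν)/√2) + e^{−(ν+2γ)²/2}(ν−2γ) − e^{−(ν−2γ)²/2}(ν+2γ) ] / (4√(2π)γ), and I21(γ,ν) = −(1/2)(ν−γ)(erf((ν−2γ)/√2)+1) − e^{−(ν−2γ)²/2}/√(2π). -/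

import Mathlib

open MeasureTheory ProbabilityTheory Filter Real

/-- The error function `erf(x) = (2/√π) ∫₀ˣ e^{-t²} dt`. -/
noncomputable def erf (x : ℝ) : ℝ := (2 / Real.sqrt π) * ∫ t in (0:ℝ)..x, Real.exp (-t^2)

/-- The complementary error function. -/
noncomputable def erfc (x : ℝ) : ℝ := 1 - erf x

noncomputable def I22 (γ ν : ℝ) : ℝ :=
  (1/2) * (ν + γ) * erfc ((ν + 2*γ) / Real.sqrt 2)
    - Real.exp (-(ν + 2*γ)^2 / 2) / Real.sqrt (2*π)

noncomputable def I1 (γ ν : ℝ) : ℝ :=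
  (Real.sqrt (π/2) * (ν^2 + 1) * erf ((2*γ - ν) / Real.sqrt 2)
    + Real.sqrt (π/2) * (ν^2 + 1) * erf ((2*γ + ν) / Real.sqrt 2)
    + Real.exp (-(ν + 2*γ)^2 / 2) * (ν - 2*γ)
    - Real.exp (-(ν - 2*γ)^2 / 2) * (ν + 2*γ)) / (4 * Real.sqrt (2*π) * γ)

noncomputable def I21 (γ ν : ℝ) : ℝ :=
  -(1/2) * (ν - γ) * (erf ((ν - 2*γ) / Real.sqrt 2) + 1)
    - Real.exp (-(ν - 2*γ)^2 / 2) / Real.sqrt (2*π)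

section Helpers

open Set intervalIntegral

lemma sqrt_pi_half' : Real.sqrt (π/2) = Real.sqrt (2*π) / 2 := by
  rw [show π/2 = (2*π)/4 by ring, show (4:ℝ) = 2^2 by norm_num,
    Real.sqrt_div (by positivity), Real.sqrt_sq (by norm_num : (0:ℝ) ≤ 2)]

lemma erf_neg (x : ℝ) : erf (-x) = - erf x := by
  unfold erf
  have : (∫ t in (0:ℝ)..(-x), Real.exp (-t^2)) = - ∫ t in (0:ℝ)..x, Real.exp (-t^2) := by
    have h := intervalIntegral.integral_comp_neg (a := (0:ℝ)) (b := x)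
      (fun t => Real.exp (-t^2))
    simp only [neg_sq, neg_zero] at h
    rw [intervalIntegral.integral_symm, ← h]
  rw [this]; ring

lemma erf_int (x : ℝ) :
    ∫ s in (0:ℝ)..x, Real.exp (-s^2/2) = (Real.sqrt (2*π) / 2) * erf (x / Real.sqrt 2) := by
  have h2 : (Real.sqrt 2 : ℝ) ≠ 0 := by positivity
  have key : ∀ s : ℝ, Real.exp (-s^2/2) = Real.exp (-(s / Real.sqrt 2)^2) := by
    intro s
    rw [div_pow, Real.sq_sqrt (by norm_num : (0:ℝ) ≤ 2)]
    ring_nf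
  simp_rw [key]
  rw [intervalIntegral.integral_comp_div (fun t => Real.exp (-t^2)) h2]
  unfold erf
  rw [zero_div]
  have hπ : Real.sqrt π ≠ 0 := by positivity
  rw [smul_eq_mul, Real.sqrt_mul (by norm_num : (0:ℝ) ≤ 2) π]
  field_simp

lemma int_e : Integrable (fun x : ℝ => Real.exp (-x^2/2)) := by
  have h := integrable_exp_neg_mul_sq (by norm_num : (0:ℝ) < 1/2)
  have e : (fun x:ℝ => Real.exp (-x^2/2)) = fun x => Real.exp (-(1/2:ℝ) * x^2) :=
    funext fun x => by rw [show -x^2/2 = -(1/2:ℝ)*x^2 by ring]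
  rw [e]; exact h

lemma int_xe : Integrable (fun x : ℝ => x * Real.exp (-x^2/2)) := by
  have h := integrable_mul_exp_neg_mul_sq (by norm_num : (0:ℝ) < 1/2)
  have e : (fun x:ℝ => x * Real.exp (-x^2/2)) = fun x => x * Real.exp (-(1/2:ℝ) * x^2) :=
    funext fun x => by rw [show -x^2/2 = -(1/2:ℝ)*x^2 by ring]
  rw [e]; exact h

lemma gauss_total : ∫ x : ℝ, Real.exp (-x^2/2) = Real.sqrt (2*π) := by
  have h := integral_gaussian (1/2 : ℝ)
  have e : (fun x:ℝ => Real.exp (-x^2/2)) = fun x => Real.exp (-(1/2:ℝ) * x^2) :=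
    funext fun x => by rw [show -x^2/2 = -(1/2:ℝ)*x^2 by ring]
  rw [e, h, show π/(1/2:ℝ) = 2*π by ring]

lemma J0_Iic_zero : ∫ x in Iic (0:ℝ), Real.exp (-x^2/2) = Real.sqrt (2*π) / 2 := by
  have h1 : (∫ x in Iic (0:ℝ), Real.exp (-x^2/2)) = ∫ x in Ioi (0:ℝ), Real.exp (-x^2/2) := by
    have h := integral_comp_neg_Iic (0:ℝ) (fun x => Real.exp (-x^2/2))
    simpa using h
  have h2 := integral_Iic_add_Ioi (b := (0:ℝ))
    int_e.integrableOn int_e.integrableOn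
  rw [gauss_total] at h2
  linarith

lemma hasDeriv_e (x : ℝ) :
    HasDerivAt (fun y : ℝ => Real.exp (-y^2/2)) (-x * Real.exp (-x^2/2)) x := by
  have h1 : HasDerivAt (fun y : ℝ => -y^2/2) (-x) x := by
    have h := ((hasDerivAt_pow 2 x).neg).div_const 2
    refine h.congr_deriv ?_
    simp; ring
  have := h1.exp
  convert this using 1
  ring

lemma hasDeriv_negexp (x : ℝ) :
    HasDerivAt (fun y : ℝ => -Real.exp (-y^2/2)) (x * Real.exp (-x^2/2)) x := by
  have := (hasDeriv_e x).neg
  refine this.congr_deriv ?_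
  ring

lemma hasDeriv_F2 (x : ℝ) :
    HasDerivAt (fun y : ℝ => -y * Real.exp (-y^2/2)) ((x^2 - 1) * Real.exp (-x^2/2)) x := by
  have := ((hasDerivAt_id x).neg).mul (hasDeriv_e x)
  refine this.congr_deriv ?_
  simp
  ring

lemma tendsto_negexp_atTop : Tendsto (fun x : ℝ => -Real.exp (-x^2/2)) atTop (nhds 0) := by
  have h2 : Tendsto (fun x : ℝ => x^2) atTop atTop := by
    simpa using tendsto_pow_atTop (n := 2) (by norm_num)
  have h3 : Tendsto (fun x : ℝ => -x^2/2) atTop atBot := by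
    have := (h2.atTop_div_const (by norm_num : (0:ℝ) < 2))
    exact tendsto_neg_atTop_atBot.comp this |>.congr (fun x => by simp [neg_div])
  have := (Real.tendsto_exp_atBot.comp h3).neg
  simpa using this

lemma tendsto_negexp_atBot : Tendsto (fun x : ℝ => -Real.exp (-x^2/2)) atBot (nhds 0) := by
  have h := tendsto_negexp_atTop.comp tendsto_neg_atBot_atTop
  have e : ((fun x : ℝ => -Real.exp (-x^2/2)) ∘ Neg.neg) = fun x : ℝ => -Real.exp (-x^2/2) :=
    funext fun x => by simp [Function.comp]
  rwa [e] at h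

lemma J1_Iic (a : ℝ) :
    ∫ x in Set.Iic a, x * Real.exp (-x^2/2) = -Real.exp (-a^2/2) := by
  have h := MeasureTheory.integral_Iic_of_hasDerivAt_of_tendsto'
    (f := fun y : ℝ => -Real.exp (-y^2/2)) (f' := fun x : ℝ => x * Real.exp (-x^2/2))
    (a := a) (fun x _ => hasDeriv_negexp x) int_xe.integrableOn tendsto_negexp_atBot
  simpa using h

lemma J1_Ioi (a : ℝ) :
    ∫ x in Set.Ioi a, x * Real.exp (-x^2/2) = Real.exp (-a^2/2) := by
  have h := MeasureTheory.integral_Ioi_of_hasDerivAt_of_tendsto'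
    (f := fun y : ℝ => -Real.exp (-y^2/2)) (f' := fun x : ℝ => x * Real.exp (-x^2/2))
    (a := a) (fun x _ => hasDeriv_negexp x) int_xe.integrableOn tendsto_negexp_atTop
  simpa using h

lemma J0_Iic (a : ℝ) :
    ∫ x in Set.Iic a, Real.exp (-x^2/2)
      = Real.sqrt (2*π) / 2 * (1 + erf (a / Real.sqrt 2)) := by
  have h := intervalIntegral.integral_Iic_sub_Iic (μ := volume)
    (f := fun x : ℝ => Real.exp (-x^2/2)) (a := (0:ℝ)) (b := a)
    int_e.integrableOn int_e.integrableOn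
  rw [J0_Iic_zero, erf_int] at h
  linarith

lemma J0_Ioi (a : ℝ) :
    ∫ x in Set.Ioi a, Real.exp (-x^2/2)
      = Real.sqrt (2*π) / 2 * (1 - erf (a / Real.sqrt 2)) := by
  have h := integral_Iic_add_Ioi (b := a) (μ := volume)
    (f := fun x : ℝ => Real.exp (-x^2/2)) int_e.integrableOn int_e.integrableOn
  rw [gauss_total, J0_Iic] at h
  linarith

lemma K0 (a b : ℝ) :
    ∫ x in a..b, Real.exp (-x^2/2)
      = Real.sqrt (2*π) / 2 * (erf (b / Real.sqrt 2) - erf (a / Real.sqrt 2)) := by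
  have h := intervalIntegral.integral_Iic_sub_Iic (μ := volume)
    (f := fun x : ℝ => Real.exp (-x^2/2)) (a := a) (b := b)
    int_e.integrableOn int_e.integrableOn
  rw [J0_Iic, J0_Iic] at h
  rw [← h]; ring

lemma K1 (a b : ℝ) :
    ∫ x in a..b, x * Real.exp (-x^2/2) = Real.exp (-a^2/2) - Real.exp (-b^2/2) := by
  have h := intervalIntegral.integral_eq_sub_of_hasDerivAt
    (f := fun y : ℝ => -Real.exp (-y^2/2)) (f' := fun x : ℝ => x * Real.exp (-x^2/2))
    (a := a) (b := b) (fun x _ => hasDeriv_negexp x)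
    ((Continuous.intervalIntegrable (by continuity) a b))
  rw [h]; ring

lemma K2 (a b : ℝ) :
    ∫ x in a..b, (x^2 - 1) * Real.exp (-x^2/2)
      = a * Real.exp (-a^2/2) - b * Real.exp (-b^2/2) := by
  have h := intervalIntegral.integral_eq_sub_of_hasDerivAt
    (f := fun y : ℝ => -y * Real.exp (-y^2/2)) (f' := fun x : ℝ => (x^2-1) * Real.exp (-x^2/2))
    (a := a) (b := b) (fun x _ => hasDeriv_F2 x)
    ((Continuous.intervalIntegrable (by continuity) a b))
  rw [h]; ring

end Helpers

set_option maxHeartbeats 1000000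

/-- the Gaussian expectation of the box-constrained per-coordinate optimum
`f(h) = min_{t∈[-1,1]} ((h+ν)t + γt²)` equals `I22 - I1 + I21`. -/
theorem gaussian_expectation_fbox (γ ν : ℝ) (hγ : 0 < γ) :
    (∫ h : ℝ, (if |h + ν| ≤ 2*γ then -((h + ν)^2 / (4*γ)) else -|h + ν| + γ)
      ∂(gaussianReal 0 1)) = I22 γ ν - I1 γ ν + I21 γ ν := by
  have hγ' : γ ≠ 0 := hγ.ne'
  have hab : -(ν + 2*γ) ≤ 2*γ - ν := by linarith
  set e : ℝ → ℝ := fun h => Real.exp (-h^2/2) with he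
  set fExp : ℝ → ℝ := fun h =>
    (if |h + ν| ≤ 2*γ then -((h + ν)^2 / (4*γ)) else -|h + ν| + γ) * e h with hfExp
  set gA : ℝ → ℝ := fun h => h * e h + (ν + γ) * e h with hgA
  set gB : ℝ → ℝ := fun h => (-(1/(4*γ))) * ((h^2 - 1) * e h)
    + (-(2*ν)/(4*γ)) * (h * e h) + (-(ν^2+1)/(4*γ)) * e h with hgB
  set gC : ℝ → ℝ := fun h => (-1) * (h * e h) + (γ - ν) * e h with hgC
  -- Step 1: convert to a Lebesgue integral against the Gaussian density
  have hA : (∫ h : ℝ, (if |h + ν| ≤ 2*γ then -((h + ν)^2 / (4*γ)) else -|h + ν| + γ)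
      ∂(gaussianReal 0 1)) = (Real.sqrt (2*π))⁻¹ * ∫ h : ℝ, fExp h := by
    rw [gaussianReal_of_var_ne_zero 0 one_ne_zero, gaussianPDF_def]
    rw [show (fun x => ENNReal.ofReal (gaussianPDFReal 0 1 x))
        = (fun x => ((gaussianPDFReal 0 1 x).toNNReal : ENNReal)) from rfl]
    rw [integral_withDensity_eq_integral_smul
      ((measurable_gaussianPDFReal 0 1).real_toNNReal) _]
    rw [← integral_const_mul]
    congr 1; ext h
    have hpdf : gaussianPDFReal 0 1 h = (Real.sqrt (2*π))⁻¹ * Real.exp (-h^2/2) := by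
      simp [gaussianPDFReal]
    rw [NNReal.smul_def, Real.coe_toNNReal _ (gaussianPDFReal_nonneg 0 1 h), hpdf]
    simp only [hfExp, he, smul_eq_mul]
    ring
  -- EqOn lemmas
  have hEqA : Set.EqOn fExp gA (Set.Iic (-(ν + 2*γ))) := by
    intro h hh
    simp only [Set.mem_Iic] at hh
    rw [hfExp, hgA]
    dsimp only
    have h1 : h + ν ≤ -(2*γ) := by linarith
    split_ifs with hc
    · have h2 : h + ν = -(2*γ) := le_antisymm h1 (abs_le.mp hc).1
      have h3 : h = -(2*γ) - ν := by linarith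
      rw [h3]
      field_simp
      ring
    · have habs : |h + ν| = -(h+ν) := abs_of_nonpos (by linarith)
      rw [habs]; ring
  have hEqB : Set.EqOn fExp gB (Set.Ioc (-(ν + 2*γ)) (2*γ - ν)) := by
    intro h hh
    simp only [Set.mem_Ioc] at hh
    obtain ⟨h1, h2⟩ := hh
    have hc : |h + ν| ≤ 2*γ := abs_le.mpr ⟨by linarith, by linarith⟩
    rw [hfExp, hgB]
    dsimp only
    rw [if_pos hc]
    field_simp
    ring
  have hEqC : Set.EqOn fExp gC (Set.Ioi (2*γ - ν)) := by
    intro h hh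
    simp only [Set.mem_Ioi] at hh
    have h1 : 2*γ < h + ν := by linarith
    have habs : |h + ν| = h + ν := abs_of_nonneg (by linarith)
    rw [hfExp, hgC]
    dsimp only
    rw [if_neg (by rw [habs]; linarith)]
    rw [habs]; ring
  -- Integrability
  have hgAint : Integrable gA := int_xe.add (int_e.const_mul (ν + γ))
  have hgCint : Integrable gC := (int_xe.const_mul (-1)).add (int_e.const_mul (γ - ν))
  have hce : Continuous e := by
    rw [he]
    exact (((continuous_pow 2).neg.div_const 2).rexp)
  have hgBcont : Continuous gB := by
    rw [hgB]
    exact ((continuous_const.mul (((continuous_pow 2).sub continuous_const).mul hce)).add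
      (continuous_const.mul (continuous_id.mul hce))).add (continuous_const.mul hce)
  have hIA : IntegrableOn fExp (Set.Iic (-(ν + 2*γ))) :=
    hgAint.integrableOn.congr_fun hEqA.symm measurableSet_Iic
  have hIB : IntegrableOn fExp (Set.Ioc (-(ν + 2*γ)) (2*γ - ν)) :=
    (hgBcont.integrableOn_Ioc).congr_fun hEqB.symm measurableSet_Ioc
  have hIC : IntegrableOn fExp (Set.Ioi (2*γ - ν)) :=
    hgCint.integrableOn.congr_fun hEqC.symm measurableSet_Ioi
  have hIAoi : IntegrableOn fExp (Set.Ioi (-(ν + 2*γ))) := by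
    rw [← Set.Ioc_union_Ioi_eq_Ioi hab]
    exact hIB.union hIC
  -- Split
  have hsplit : (∫ h : ℝ, fExp h)
      = (∫ h in Set.Iic (-(ν + 2*γ)), fExp h)
        + ((∫ h in Set.Ioc (-(ν + 2*γ)) (2*γ - ν), fExp h)
          + ∫ h in Set.Ioi (2*γ - ν), fExp h) := by
    rw [← intervalIntegral.integral_Iic_add_Ioi hIA hIAoi]
    congr 1
    rw [← Set.Ioc_union_Ioi_eq_Ioi hab]
    exact (setIntegral_union Set.Ioc_disjoint_Ioi_same measurableSet_Ioi hIB hIC)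
  -- Evaluate piece A
  have hvalA : (∫ h in Set.Iic (-(ν + 2*γ)), fExp h)
      = -Real.exp (-(-(ν + 2*γ))^2/2)
        + (ν + γ) * (Real.sqrt (2*π) / 2 * (1 + erf ((-(ν + 2*γ)) / Real.sqrt 2))) := by
    rw [setIntegral_congr_fun measurableSet_Iic hEqA, hgA]
    rw [integral_add (int_xe.integrableOn) ((int_e.const_mul (ν+γ)).integrableOn)]
    rw [integral_const_mul]
    rw [J1_Iic, J0_Iic]
  -- Evaluate piece C
  have hvalC : (∫ h in Set.Ioi (2*γ - ν), fExp h)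
      = -Real.exp (-(2*γ - ν)^2/2)
        + (γ - ν) * (Real.sqrt (2*π) / 2 * (1 - erf ((2*γ - ν) / Real.sqrt 2))) := by
    rw [setIntegral_congr_fun measurableSet_Ioi hEqC, hgC]
    rw [integral_add ((int_xe.const_mul (-1)).integrableOn) ((int_e.const_mul (γ-ν)).integrableOn)]
    rw [integral_const_mul, integral_const_mul]
    rw [J1_Ioi, J0_Ioi]
    ring
  -- Evaluate piece B
  have hcont1 : Continuous (fun h : ℝ => (h^2 - 1) * e h) :=
    ((continuous_pow 2).sub continuous_const).mul hce
  have hcont2 : Continuous (fun h : ℝ => h * e h) := continuous_id.mul hce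
  have hcont3 : Continuous e := hce
  have hvalB : (∫ h in Set.Ioc (-(ν + 2*γ)) (2*γ - ν), fExp h)
      = (-(1/(4*γ))) * ((-(ν + 2*γ)) * Real.exp (-(-(ν + 2*γ))^2/2)
          - (2*γ - ν) * Real.exp (-(2*γ - ν)^2/2))
        + (-(2*ν)/(4*γ)) * (Real.exp (-(-(ν + 2*γ))^2/2) - Real.exp (-(2*γ - ν)^2/2))
        + (-(ν^2+1)/(4*γ)) * (Real.sqrt (2*π) / 2
            * (erf ((2*γ - ν) / Real.sqrt 2) - erf ((-(ν + 2*γ)) / Real.sqrt 2))) := by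
    rw [setIntegral_congr_fun measurableSet_Ioc hEqB, hgB]
    rw [← intervalIntegral.integral_of_le hab]
    rw [intervalIntegral.integral_add (f := fun h => (-(1/(4*γ))) * ((h^2 - 1) * e h)
        + (-(2*ν)/(4*γ)) * (h * e h)) (g := fun h => (-(ν^2+1)/(4*γ)) * e h)
        (((continuous_const.mul hcont1).add
        (continuous_const.mul hcont2)).intervalIntegrable _ _)
        ((continuous_const.mul hcont3).intervalIntegrable _ _)]
    rw [intervalIntegral.integral_add (f := fun h => (-(1/(4*γ))) * ((h^2 - 1) * e h))
        (g := fun h => (-(2*ν)/(4*γ)) * (h * e h))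
        ((continuous_const.mul hcont1).intervalIntegrable _ _)
        ((continuous_const.mul hcont2).intervalIntegrable _ _)]
    rw [intervalIntegral.integral_const_mul, intervalIntegral.integral_const_mul,
      intervalIntegral.integral_const_mul]
    rw [K2, K1, K0]
  -- Assemble
  rw [hA, hsplit, hvalA, hvalB, hvalC]
  unfold I22 I1 I21 erfc
  rw [show ((-(ν + 2*γ)) : ℝ) / Real.sqrt 2 = -((ν + 2*γ) / Real.sqrt 2) by ring, erf_neg]
  rw [show ((ν - 2*γ) : ℝ) / Real.sqrt 2 = -((2*γ - ν) / Real.sqrt 2) by ring, erf_neg]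
  rw [show ((2*γ + ν) : ℝ) = ν + 2*γ by ring]
  rw [show ((-(ν + 2*γ))^2 : ℝ) = (ν + 2*γ)^2 by ring]
  rw [show ((ν - 2*γ)^2 : ℝ) = (2*γ - ν)^2 by ring]
  rw [sqrt_pi_half']
  have hc : Real.sqrt (2*π) ≠ 0 := by positivity
  field_simp
  ring
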